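/- Let f be a standard interference function on the nonnegative orthant of ℝ^n and let S ⊆ {1,…,n}. Suppose (α*, μ*) is feasible and optimal, i.e., α ≤ α* for every feasible pair (α, μ). Then H(μ*) = 1 and there exists j ∈ S with μ*_j = α*·f_j(μ*). -/

import Mathlib

/-- `F` is a standard interference function on the nonnegative orthant of `ℝ^n`:
(i) positivity, (ii) monotonicity, (iii) scalability. -/
def IsSIF {n : ℕ} (F : (Fin n → ℝ) → Fin n → ℝ) : Prop :=
  (∀ μ : Fin n → ℝ, (∀ j, 0 ≤ μ j) → ∀ j, 0 < F μ j) ∧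
  (∀ μ μ' : Fin n → ℝ, (∀ j, 0 ≤ μ j) → (∀ j, μ j ≤ μ' j) →
    ∀ j, F μ j ≤ F μ' j) ∧
  (∀ β : ℝ, 1 < β → ∀ μ : Fin n → ℝ, (∀ j, 0 ≤ μ j) →
    ∀ j, F (fun l => β * μ l) j < β * F μ j)

/-- Necessary optimality condition for user-centric demand scaling:
at an optimum `(α*, μ*)` the normalized maximum load equals one,
and some scaling constraint in `S` is tight. -/
theorem maxD_necessary_condition (n m : ℕ) (hn : 0 < n) (hm : 0 < m)
    (J : Fin m → Finset (Fin n)) (hcover : ∀ j : Fin n, ∃ i : Fin m, j ∈ J i)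
    (ρbar : ℝ) (hρ : 0 < ρbar)
    (S : Finset (Fin n))
    (f : (Fin n → ℝ) → Fin n → ℝ) (hf : IsSIF f)
    (H : (Fin n → ℝ) → ℝ)
    (hH : ∀ μ : Fin n → ℝ, H μ = (1 / ρbar) * ⨆ i : Fin m, ∑ j ∈ J i, μ j)
    (Feasible : ℝ → (Fin n → ℝ) → Prop)
    (hFeas : ∀ (α : ℝ) (μ : Fin n → ℝ), Feasible α μ ↔
      1 ≤ α ∧ (∀ j, 0 ≤ μ j) ∧
      (∀ j ∈ S, α * f μ j ≤ μ j) ∧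
      (∀ j ∉ S, f μ j ≤ μ j) ∧
      (∀ i : Fin m, ∑ j ∈ J i, μ j ≤ ρbar))
    (αstar : ℝ) (μstar : Fin n → ℝ)
    (hfeas : Feasible αstar μstar)
    (hopt : ∀ (α : ℝ) (μ : Fin n → ℝ), Feasible α μ → α ≤ αstar) :
    H μstar = 1 ∧ ∃ j ∈ S, μstar j = αstar * f μstar j := by
  obtain ⟨hpos, hmono, hscal⟩ := hf
  rw [hFeas] at hfeas
  obtain ⟨hα1, hμ0, hS3, hS4, hload⟩ := hfeas
  have hα0 : 0 < αstar := lt_of_lt_of_le one_pos hα1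
  -- S is nonempty
  have hSne : S.Nonempty := by
    by_contra hS
    rw [Finset.not_nonempty_iff_eq_empty] at hS
    have hfe : Feasible (αstar + 1) μstar := by
      rw [hFeas]
      refine ⟨by linarith, hμ0, ?_, hS4, hload⟩
      intro j hj
      simp [hS] at hj
    linarith [hopt _ _ hfe]
  -- key improvement lemma
  have key : ∀ μ : Fin n → ℝ, (∀ j, 0 ≤ μ j) →
      (∀ j ∉ S, f μ j ≤ μ j) → (∀ i, ∑ j ∈ J i, μ j ≤ ρbar) →
      (∀ j ∈ S, αstar * f μ j < μ j) → False := by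
    intro μ h0 h4 h5 hstrict
    set α' := S.inf' hSne (fun j => μ j / f μ j) with hα'
    have hfμ : ∀ j, 0 < f μ j := hpos μ h0
    have hlt : αstar < α' := by
      rw [hα', Finset.lt_inf'_iff]
      intro j hj
      rw [lt_div_iff₀ (hfμ j)]
      exact hstrict j hj
    have hfe : Feasible α' μ := by
      rw [hFeas]
      refine ⟨by linarith, h0, ?_, h4, h5⟩
      intro j hj
      have hle := Finset.inf'_le (fun j => μ j / f μ j) hj
      calc α' * f μ j ≤ (μ j / f μ j) * f μ j :=
            mul_le_mul_of_nonneg_right hle (hfμ j).le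
        _ = μ j := div_mul_cancel₀ _ (hfμ j).ne'
    linarith [hopt _ _ hfe]
  constructor
  · -- H μstar = 1
    haveI : Nonempty (Fin m) := ⟨⟨0, hm⟩⟩
    set T := ⨆ i : Fin m, ∑ j ∈ J i, μstar j with hT
    have hble : BddAbove (Set.range fun i : Fin m => ∑ j ∈ J i, μstar j) :=
      (Set.finite_range _).bddAbove
    have hTle : T ≤ ρbar := ciSup_le hload
    have hμpos : ∀ j, 0 < μstar j := by
      intro j
      by_cases hj : j ∈ S
      · have h1 := hS3 j hj
        nlinarith [hpos μstar hμ0 j]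
      · exact lt_of_lt_of_le (hpos μstar hμ0 j) (hS4 j hj)
    have hTpos : 0 < T := by
      obtain ⟨i0, hi0⟩ := hcover ⟨0, hn⟩
      have h1 : μstar ⟨0, hn⟩ ≤ ∑ j ∈ J i0, μstar j :=
        Finset.single_le_sum (fun j _ => (hμpos j).le) hi0
      have h2 : ∑ j ∈ J i0, μstar j ≤ T := le_ciSup hble i0
      linarith [hμpos ⟨0, hn⟩]
    have hTeq : T = ρbar := by
      by_contra hne
      have hTlt : T < ρbar := lt_of_le_of_ne hTle hne
      set β := ρbar / T with hβ
      have hβ1 : 1 < β := (one_lt_div hTpos).mpr hTlt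
      have hβ0 : 0 < β := lt_trans one_pos hβ1
      apply key (fun l => β * μstar l) (fun j => mul_nonneg hβ0.le (hμ0 j))
      · intro j hj
        have h1 := hscal β hβ1 μstar hμ0 j
        have h2 := hS4 j hj
        show f (fun l => β * μstar l) j ≤ β * μstar j
        nlinarith
      · intro i
        have h2 : ∑ j ∈ J i, μstar j ≤ T := le_ciSup hble i
        have h3 : ∑ j ∈ J i, β * μstar j = β * ∑ j ∈ J i, μstar j :=
          (Finset.mul_sum _ _ _).symm
        rw [h3]
        calc β * ∑ j ∈ J i, μstar j ≤ β * T := by nlinarith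
          _ = ρbar := by rw [hβ, div_mul_cancel₀ _ hTpos.ne']
      · intro j hj
        have h1 := hscal β hβ1 μstar hμ0 j
        have h2 := hS3 j hj
        show αstar * f (fun l => β * μstar l) j < β * μstar j
        nlinarith
    rw [hH, ← hT, hTeq]
    field_simp
  · by_contra hno
    push_neg at hno
    apply key μstar hμ0 hS4 hload
    intro j hj
    exact lt_of_le_of_ne (hS3 j hj) (fun h => hno j hj h.symm)
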